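/- For every prime p and every Baxter C-algebra (R,P) of weight λ, and every element a ∈ R, one has P(a)^p ≡ λ^{p-1} P(a^p) modulo the ideal p·R. -/

import Mathlib

/-- Auxiliary "double" of a commutative ring with respect to a weight `L`. -/
structure BaxDouble (R : Type*) [CommRing R] (L : R) where
  u : R
  x : R

namespace BaxDouble

variable {R : Type*} [CommRing R] {L : R}

@[ext] theorem ext' {s t : BaxDouble R L} (h1 : s.u = t.u) (h2 : s.x = t.x) : s = t := by
  cases s; cases t; simp_all

instance : Add (BaxDouble R L) := ⟨fun s t => ⟨s.u + t.u, s.x + t.x⟩⟩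
instance : Zero (BaxDouble R L) := ⟨⟨0, 0⟩⟩
instance : Neg (BaxDouble R L) := ⟨fun s => ⟨-s.u, -s.x⟩⟩
instance : One (BaxDouble R L) := ⟨⟨1, 0⟩⟩
instance : Mul (BaxDouble R L) :=
  ⟨fun s t => ⟨s.u * t.u, s.u * t.x + t.u * s.x + L * (s.x * t.x)⟩⟩

@[simp] theorem mul_u (s t : BaxDouble R L) : (s * t).u = s.u * t.u := rfl
@[simp] theorem mul_x (s t : BaxDouble R L) :
    (s * t).x = s.u * t.x + t.u * s.x + L * (s.x * t.x) := rfl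
@[simp] theorem add_u (s t : BaxDouble R L) : (s + t).u = s.u + t.u := rfl
@[simp] theorem add_x (s t : BaxDouble R L) : (s + t).x = s.x + t.x := rfl
@[simp] theorem one_u : (1 : BaxDouble R L).u = 1 := rfl
@[simp] theorem one_x : (1 : BaxDouble R L).x = 0 := rfl
@[simp] theorem zero_u : (0 : BaxDouble R L).u = 0 := rfl
@[simp] theorem zero_x : (0 : BaxDouble R L).x = 0 := rfl
@[simp] theorem neg_u (s : BaxDouble R L) : (-s).u = -s.u := rfl
@[simp] theorem neg_x (s : BaxDouble R L) : (-s).x = -s.x := rfl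

instance : CommRing (BaxDouble R L) where
  add := (· + ·)
  zero := 0
  neg := Neg.neg
  one := 1
  mul := (· * ·)
  nsmul := nsmulRec
  zsmul := zsmulRec
  add_assoc a b c := by ext <;> simp <;> ring
  zero_add a := by ext <;> simp
  add_zero a := by ext <;> simp
  add_comm a b := by ext <;> simp <;> ring
  neg_add_cancel a := by ext <;> simp
  left_distrib a b c := by ext <;> simp <;> ring
  right_distrib a b c := by ext <;> simp <;> ring
  zero_mul a := by ext <;> simp
  mul_zero a := by ext <;> simp
  mul_assoc a b c := by ext <;> simp <;> ring
  one_mul a := by ext <;> simp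
  mul_one a := by ext <;> simp
  mul_comm a b := by ext <;> simp <;> ring

theorem nsmul_x (n : ℕ) (s : BaxDouble R L) : (n • s).x = n • s.x := by
  induction n with
  | zero => simp
  | succ k ih => rw [succ_nsmul, succ_nsmul, add_x, ih]

theorem pow_mk_left (v : R) (n : ℕ) :
    (⟨v, 0⟩ : BaxDouble R L) ^ n = ⟨v ^ n, 0⟩ := by
  induction n with
  | zero => ext <;> simp
  | succ k ih => rw [pow_succ, ih]; ext <;> simp [pow_succ]

theorem pow_mk_right (a : R) (n : ℕ) :
    (⟨0, a⟩ : BaxDouble R L) ^ (n + 1) = ⟨0, L ^ n * a ^ (n + 1)⟩ := by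
  induction n with
  | zero => ext <;> simp
  | succ k ih => rw [pow_succ, ih]; ext <;> simp <;> ring

/-- The key inductive identity in the double ring. -/
theorem key {R : Type*} [CommRing R] (L : R) (Pf : R → R)
    (hadd : ∀ x y : R, Pf (x + y) = Pf x + Pf y)
    (hsmul : ∀ z : R, Pf (L * z) = L * Pf z)
    (hP : ∀ x y : R, Pf x * Pf y = Pf (x * Pf y) + Pf (Pf x * y) + L * Pf (x * y))
    (a : R) (n : ℕ) :
    ((⟨Pf a, a⟩ : BaxDouble R L) ^ (n + 1)).u = (Pf a) ^ (n + 1) ∧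
      Pf (((⟨Pf a, a⟩ : BaxDouble R L) ^ (n + 1)).x) = (Pf a) ^ (n + 1) := by
  set s : BaxDouble R L := ⟨Pf a, a⟩ with hs
  induction n with
  | zero => constructor <;> simp [hs]
  | succ k ih =>
    obtain ⟨ihu, ihx⟩ := ih
    constructor
    · rw [pow_succ, mul_u, ihu]
      show Pf a ^ (k + 1) * Pf a = _
      rw [← pow_succ]
    · rw [pow_succ, mul_x, ihu]
      show Pf (Pf a ^ (k + 1) * a + Pf a * (s ^ (k + 1)).x + L * ((s ^ (k + 1)).x * a))
          = Pf a ^ (k + 1 + 1)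
      rw [← ihx, hadd, hadd, hsmul, mul_comm (Pf a) ((s ^ (k + 1)).x)]
      have hXa := hP ((s ^ (k + 1)).x) a
      linear_combination Pf a * ihx - hXa
        + hadd (Pf ((s ^ (k + 1)).x) * a) ((s ^ (k + 1)).x * Pf a) * 0

end BaxDouble

/-- In a Baxter `C`-algebra `(R, P)` of weight `λ` and a prime `p`, for every `a ∈ R`,
`P(a)^p ≡ λ^{p-1} P(a^p) (mod p)`. -/
theorem baxter_fermat_elt {C R : Type*} [CommRing C] [CommRing R] [Algebra C R]
    (lam : C) (P : R →ₗ[C] R)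
    (hP : ∀ x y : R, P x * P y = P (x * P y) + P (P x * y) + algebraMap C R lam * P (x * y))
    (p : ℕ) (hp : p.Prime) (a : R) :
    (P a) ^ p - (algebraMap C R lam) ^ (p - 1) * P (a ^ p) ∈ Ideal.span {(p : R)} := by
  set L : R := algebraMap C R lam with hL
  have hsmul : ∀ z : R, P (L * z) = L * P z := by
    intro z
    rw [hL, ← Algebra.smul_def, map_smul, Algebra.smul_def]
  have hadd : ∀ x y : R, P (x + y) = P x + P y := fun x y => map_add P x y
  have hp1 : p - 1 + 1 = p := Nat.succ_pred_eq_of_pos hp.pos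
  have key := BaxDouble.key L (fun z => P z) hadd hsmul hP a (p - 1)
  rw [hp1] at key
  obtain ⟨hku, hkx⟩ := key
  -- binomial expansion of s = (P a, 0) + (0, a)
  have hsplit : (⟨P a, a⟩ : BaxDouble R L) = (⟨P a, 0⟩ : BaxDouble R L) + ⟨0, a⟩ := by
    ext <;> simp
  obtain ⟨r, hr⟩ : ∃ r : BaxDouble R L, ((⟨P a, 0⟩ : BaxDouble R L) + ⟨0, a⟩) ^ p =
      (⟨P a, 0⟩ : BaxDouble R L) ^ p + (⟨0, a⟩ : BaxDouble R L) ^ p + (p : BaxDouble R L) * r := by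
    obtain ⟨r, hr⟩ := exists_add_pow_prime_eq hp (⟨P a, 0⟩ : BaxDouble R L)
      (⟨0, a⟩ : BaxDouble R L)
    exact ⟨(⟨P a, 0⟩ : BaxDouble R L) * ⟨0, a⟩ * r, by rw [hr]; ring⟩
  have hx : ((⟨P a, a⟩ : BaxDouble R L) ^ p).x = L ^ (p - 1) * a ^ p + p • r.x := by
    rw [hsplit, hr, ← nsmul_eq_mul, ← hp1, BaxDouble.pow_mk_right, BaxDouble.pow_mk_left,
      BaxDouble.add_x, BaxDouble.add_x, BaxDouble.nsmul_x, hp1]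
    simp
  rw [hx, map_add, map_nsmul] at hkx
  have hLP : P (L ^ (p - 1) * a ^ p) = L ^ (p - 1) * P (a ^ p) := by
    rw [hL, ← map_pow, ← Algebra.smul_def, map_smul, Algebra.smul_def, map_pow]
  rw [hLP] at hkx
  have hfin : P a ^ p - L ^ (p - 1) * P (a ^ p) = (p : R) * P r.x := by
    rw [← hkx, nsmul_eq_mul]; ring
  rw [hfin]
  exact Ideal.mem_span_singleton.mpr ⟨P r.x, rfl⟩
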